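/- The algebraic equation X^4 + X^2 - T·X + 1 = 0 has exactly one root α in the field F_3((T^{-1})) of formal power series in 1/T over the finite field F_3. -/

import Mathlib

open PowerSeries LaurentSeries
open scoped Multiplicative

local notation "ℤₘ₀" => WithZero (Multiplicative ℤ)

noncomputable section StmtAux

abbrev R3 := PowerSeries (ZMod 3)
abbrev I3 : Ideal R3 := Ideal.span {PowerSeries.X}
abbrev L3 := LaurentSeries (ZMod 3)

lemma mem_I3_pow {n : ℕ} {g : R3} : g ∈ I3 ^ n ↔ (PowerSeries.X : R3) ^ n ∣ g := by
  rw [Ideal.span_singleton_pow, Ideal.mem_span_singleton]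

lemma smod_I3 {n : ℕ} {x y : R3} :
    (x ≡ y [SMOD (I3 ^ n • ⊤ : Ideal R3)]) ↔
      ∀ k < n, PowerSeries.coeff k x = PowerSeries.coeff k y := by
  rw [smul_eq_mul, Ideal.mul_top, SModEq.sub_mem, mem_I3_pow, PowerSeries.X_pow_dvd_iff]
  constructor
  · intro h k hk
    have := h k hk
    simpa [sub_eq_zero] using this
  · intro h k hk
    simp [h k hk]

instance : IsAdicComplete I3 R3 where
  haus' := by
    intro x hx
    ext k
    have := (smod_I3).mp (hx (k+1)) k (Nat.lt_succ_self k)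
    simpa using this
  prec' := by
    intro f hf
    refine ⟨PowerSeries.mk (fun k => PowerSeries.coeff k (f (k+1))), fun n => ?_⟩
    rw [smod_I3]
    intro k hk
    have := (smod_I3).mp (hf (show k+1 ≤ n from hk)) k (Nat.lt_succ_self k)
    simp [this]

open Polynomial in
lemma exists_delta : ∃ δ : R3, δ^4 - δ^3 + PowerSeries.X^2 * δ^2 + PowerSeries.X^4 = 0 ∧
    PowerSeries.constantCoeff δ = 1 := by
  have hh : HenselianRing R3 I3 := inferInstance
  set f : Polynomial R3 :=
    Polynomial.X^4 - Polynomial.X^3 + Polynomial.C (PowerSeries.X^2) * Polynomial.X^2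
      + Polynomial.C (PowerSeries.X^4) with hf
  have hmonic : f.Monic := by
    unfold f
    monicity!
  have heval : f.eval 1 ∈ I3 := by
    have : f.eval 1 = PowerSeries.X^2 + PowerSeries.X^4 := by
      simp [hf]
    rw [this, Ideal.mem_span_singleton]
    exact ⟨PowerSeries.X + PowerSeries.X^3, by ring⟩
  have hderiv : IsUnit (Ideal.Quotient.mk I3 (f.derivative.eval 1)) := by
    have h1 : f.derivative.eval 1 = 1 + 2 * PowerSeries.X^2 := by
      simp [hf, Polynomial.derivative_pow]
      ring
    rw [h1]
    have h2 : (Ideal.Quotient.mk I3) (1 + 2 * PowerSeries.X^2) = 1 := by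
      rw [map_add, map_one]
      rw [Ideal.Quotient.eq_zero_iff_mem.mpr (by
        rw [Ideal.mem_span_singleton]; exact ⟨2*PowerSeries.X, by ring⟩)]
      ring
    rw [h2]; exact isUnit_one
  obtain ⟨δ, hroot, hmem⟩ := hh.is_henselian f hmonic 1 heval hderiv
  refine ⟨δ, ?_, ?_⟩
  · have := hroot
    simp [Polynomial.IsRoot, hf] at this
    linear_combination this
  · rw [Ideal.mem_span_singleton, PowerSeries.X_dvd_iff] at hmem
    have : PowerSeries.constantCoeff δ - 1 = 0 := by simpa using hmem
    exact sub_eq_zero.mp this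

def w (n : ℤ) : ℤₘ₀ := WithZero.coe (Multiplicative.ofAdd n)

lemma w_mul (a b : ℤ) : w a * w b = w (a + b) := by
  simp [w, ← WithZero.coe_mul, ← ofAdd_add]

lemma w_le {a b : ℤ} : w a ≤ w b ↔ a ≤ b := by
  simp [w, WithZero.coe_le_coe]

lemma w_one : w 0 = 1 := by simp [w]

lemma w_pow (a : ℤ) (n : ℕ) : w a ^ n = w (n * a) := by
  induction n with
  | zero => simp [w_one]
  | succ k ih =>
      rw [pow_succ, ih, w_mul]
      congr 1
      push_cast
      ring

lemma val_T : Valued.v (HahnSeries.single (-1 : ℤ) (1:ZMod 3) : L3) = w 1 := by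
  have := LaurentSeries.valuation_single_zpow (K := ZMod 3) (-1)
  simpa [w, WithZero.exp_eq_coe_ofAdd] using this

lemma root_val {y : L3} (h : y ^ 4 + y ^ 2 - HahnSeries.single (-1 : ℤ) 1 * y + 1 = 0) :
    Valued.v y ≤ w (-1) := by
  have hy0 : y ≠ 0 := by
    rintro rfl
    simp at h
  have hv0 : Valued.v y ≠ (0 : ℤₘ₀) := by
    simpa using (Valuation.ne_zero_iff Valued.v).mpr hy0
  obtain ⟨a, ha⟩ := WithZero.ne_zero_iff_exists.mp hv0
  obtain ⟨m, ham⟩ : ∃ m : ℤ, a = Multiplicative.ofAdd m := ⟨Multiplicative.toAdd a, rfl⟩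
  have hvy : Valued.v y = w m := by rw [← ha, ham]; rfl
  have h1 : HahnSeries.single (-1 : ℤ) (1:ZMod 3) * y = y^4 + y^2 + 1 := by linear_combination -h
  have i1 : w (1 + m) ≤ max (max (w (4*m)) (w (2*m))) (w 0) := by
    calc w (1 + m) = Valued.v (HahnSeries.single (-1 : ℤ) (1:ZMod 3) * y) := by
          rw [map_mul, val_T, hvy, w_mul]
      _ = Valued.v (y^4 + y^2 + 1) := by rw [h1]
      _ ≤ max (Valued.v (y^4 + y^2)) (Valued.v 1) := Valued.v.map_add _ _
      _ ≤ _ := by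
          rw [Valued.v.map_one, ← w_one]
          refine max_le_max ?_ le_rfl
          refine le_trans (Valued.v.map_add _ _) ?_
          rw [map_pow, map_pow, hvy, w_pow, w_pow]
          norm_num
  have h2 : y^4 = HahnSeries.single (-1 : ℤ) (1:ZMod 3) * y - y^2 - 1 := by linear_combination h
  have i2 : w (4*m) ≤ max (max (w (1+m)) (w (2*m))) (w 0) := by
    calc w (4*m) = Valued.v (y^4) := by rw [map_pow, hvy, w_pow]; norm_num
      _ = Valued.v (HahnSeries.single (-1 : ℤ) (1:ZMod 3) * y - y^2 - 1) := by rw [h2]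
      _ ≤ max (Valued.v (HahnSeries.single (-1 : ℤ) (1:ZMod 3) * y - y^2)) (Valued.v 1) :=
          Valued.v.map_sub _ _
      _ ≤ _ := by
          rw [Valued.v.map_one, ← w_one]
          refine max_le_max ?_ le_rfl
          refine le_trans (Valued.v.map_sub _ _) ?_
          rw [map_mul, map_pow, val_T, hvy, w_mul, w_pow]
          norm_num
  rw [hvy, w_le]
  rcases le_max_iff.mp i1 with ha1 | hb1
  · have hm1 : (1:ℤ) ≤ m := by
      rcases le_max_iff.mp ha1 with h' | h' <;>
        (have := w_le.mp h'; push_cast at this; omega)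
    exfalso
    rcases le_max_iff.mp i2 with hc | hd
    · rcases le_max_iff.mp hc with h' | h' <;>
        (have := w_le.mp h'; push_cast at this; omega)
    · have := w_le.mp hd; push_cast at this; omega
  · have := w_le.mp hb1; push_cast at this; omega

end StmtAux

/-- The equation `X⁴ + X² - T·X + 1 = 0` has exactly one root in `F_3((T⁻¹))`, realized
as `LaurentSeries (ZMod 3)` in the variable `X = 1/T`, so that `T = HahnSeries.single (-1) 1`. -/
theorem stmt10 :
    ∃! α : LaurentSeries (ZMod 3),
      α ^ 4 + α ^ 2 - HahnSeries.single (-1 : ℤ) 1 * α + 1 = 0 := by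
  obtain ⟨δ, hδeq, hδc⟩ := exists_delta
  set φ := HahnSeries.ofPowerSeries ℤ (ZMod 3) with hφ
  set d : L3 := φ δ with hd
  set x : L3 := φ PowerSeries.X with hxdef
  have hδ0 : δ ≠ 0 := by
    intro h
    rw [h] at hδc
    simp at hδc
  have hd0 : d ≠ 0 := by
    intro h
    apply hδ0
    apply HahnSeries.ofPowerSeries_injective (Γ := ℤ)
    rw [map_zero]
    exact h
  have hd4 : x^4 + x^2*d^2 - d^3 + d^4 = 0 := by
    have h0 := congrArg φ hδeq
    simp only [map_add, map_sub, map_mul, map_pow, map_zero] at h0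
    linear_combination h0
  have hTx : (HahnSeries.single (-1:ℤ) 1 : L3) * x = 1 := by
    rw [hxdef, hφ, HahnSeries.ofPowerSeries_X, HahnSeries.single_mul_single]
    norm_num [HahnSeries.single_zero_one]
  set A : L3 := x * d⁻¹ with hA
  have hAd : A * d = x := by
    rw [hA]
    field_simp
  have hroot : A^4 + A^2 - HahnSeries.single (-1:ℤ) 1 * A + 1 = 0 := by
    have key : (A^4 + A^2 - HahnSeries.single (-1:ℤ) 1 * A + 1) * d^4 = 0 := by
      linear_combination (A^3*d^3 + A^2*d^2*x + A*d*x^2 + x^3 + (A*d+x)*d^2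
        - (HahnSeries.single (-1:ℤ) 1 : L3)*d^3) * hAd - d^3 * hTx + hd4
    rcases mul_eq_zero.mp key with h' | h'
    · exact h'
    · exact absurd (pow_eq_zero_iff (by norm_num) |>.mp h') hd0
  refine ⟨A, hroot, ?_⟩
  intro y hy
  have hyv := root_val hy
  have hAv := root_val hroot
  have key : (y - A) * (y^3 + y^2*A + y*A^2 + A^3 + y + A
      - HahnSeries.single (-1:ℤ) 1) = 0 := by
    linear_combination hy - hroot
  have hy1 : Valued.v y ≤ 1 := le_trans hyv (by rw [← w_one]; exact w_le.mpr (by norm_num))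
  have hA1 : Valued.v A ≤ 1 := le_trans hAv (by rw [← w_one]; exact w_le.mpr (by norm_num))
  have hG : (y^3 + y^2*A + y*A^2 + A^3 + y + A - HahnSeries.single (-1:ℤ) 1 : L3) ≠ 0 := by
    intro hG0
    have hST : y^3 + y^2*A + y*A^2 + A^3 + y + A = HahnSeries.single (-1:ℤ) 1 :=
      sub_eq_zero.mp hG0
    have hvS : Valued.v (y^3 + y^2*A + y*A^2 + A^3 + y + A : L3) ≤ w (-1) := by
      have t1 : Valued.v (y^3 : L3) ≤ w (-1) := by
        rw [map_pow, pow_succ]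
        exact le_trans (mul_le_mul' (pow_le_one' hy1 2) hyv) (by rw [one_mul])
      have t2 : Valued.v (y^2*A : L3) ≤ w (-1) := by
        rw [map_mul, map_pow]
        exact le_trans (mul_le_mul' (pow_le_one' hy1 2) hAv) (by rw [one_mul])
      have t3 : Valued.v (y*A^2 : L3) ≤ w (-1) := by
        rw [map_mul, map_pow, mul_comm]
        exact le_trans (mul_le_mul' (pow_le_one' hA1 2) hyv) (by rw [one_mul])
      have t4 : Valued.v (A^3 : L3) ≤ w (-1) := by
        rw [map_pow, pow_succ]
        exact le_trans (mul_le_mul' (pow_le_one' hA1 2) hAv) (by rw [one_mul])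
      calc Valued.v (y^3 + y^2*A + y*A^2 + A^3 + y + A : L3)
          ≤ max (Valued.v (y^3 + y^2*A + y*A^2 + A^3 + y : L3)) (Valued.v A) :=
            Valued.v.map_add _ _
        _ ≤ _ := by
            refine max_le ?_ hAv
            refine le_trans (Valued.v.map_add _ _) (max_le ?_ hyv)
            refine le_trans (Valued.v.map_add _ _) (max_le ?_ t4)
            refine le_trans (Valued.v.map_add _ _) (max_le ?_ t3)
            exact le_trans (Valued.v.map_add _ _) (max_le t1 t2)
    rw [hST, val_T] at hvS
    exact absurd (w_le.mp hvS) (by norm_num)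
  have := (mul_eq_zero.mp key).resolve_right hG
  exact sub_eq_zero.mp this
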